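/- Fix k ≥ 2 and an index j ∈ {1,…,k}, and define ℓ : ℝ^k → ℝ by ℓ(v) = log(1 + Σ_{i∈{1,…,k}∖{j}} exp(1 − v_j + v_i)). Then for all u, v ∈ ℝ^k, ℓ(u + v) ≤ ℓ(u) + ⟨∇ℓ(u), v⟩ + ‖v‖_∞², where ∇ℓ(u) is the gradient of ℓ at u and ‖v‖_∞ = max_i |v_i|. -/

import Mathlib

open scoped BigOperators

noncomputable section

open Finset in
private lemma softmax_aux_var_bound {ι : Type*} [Fintype ι] [Nonempty ι] (b a : ι → ℝ)
    (hb : ∀ i, 0 ≤ b i) (K : ℝ) (hK : ∀ i m, (a i - a m) ^ 2 ≤ 4 * K) :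
    (∑ i, b i * a i ^ 2) * (∑ i, b i) - (∑ i, b i * a i) ^ 2 ≤ K * (∑ i, b i) ^ 2 := by
  obtain ⟨iM, hiM⟩ := Finite.exists_max a
  obtain ⟨im, him⟩ := Finite.exists_min a
  set c : ℝ := (a im + a iM) / 2 with hc
  have hsq : ∀ i, (a i - c) ^ 2 ≤ K := by
    intro i
    have h1 : a i ≤ a iM := hiM i
    have h2 : a im ≤ a i := him i
    have h3 : (a iM - a im) ^ 2 ≤ 4 * K := hK iM im
    nlinarith [sq_nonneg (a i - c)]
  have hD : ∑ i, b i * (a i - c) ^ 2 ≤ K * ∑ i, b i := by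
    rw [Finset.mul_sum]
    exact Finset.sum_le_sum fun i _ => by
      have := hsq i; have := hb i; nlinarith
  have hexp : ∑ i, b i * (a i - c) ^ 2
      = (∑ i, b i * a i ^ 2) - 2 * c * (∑ i, b i * a i) + c ^ 2 * (∑ i, b i) := by
    rw [Finset.mul_sum, Finset.mul_sum, ← Finset.sum_sub_distrib, ← Finset.sum_add_distrib]
    exact Finset.sum_congr rfl fun i _ => by ring
  have hBnn : 0 ≤ ∑ i, b i := Finset.sum_nonneg fun i _ => hb i
  nlinarith [sq_nonneg ((∑ i, b i * a i) - c * (∑ i, b i)), hD, hexp]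

open Finset in
private lemma softmax_aux_core {ι : Type*} [Fintype ι] [Nonempty ι] (w a : ι → ℝ)
    (hw : ∀ i, 0 < w i) (K : ℝ) (hK : ∀ i m, (a i - a m) ^ 2 ≤ 4 * K) :
    Real.log (∑ i, w i * Real.exp (a i)) ≤
      Real.log (∑ i, w i) + (∑ i, w i * a i) / (∑ i, w i) + K := by
  set h : ℝ → ℝ := fun t => ∑ i, w i * Real.exp (t * a i) with hh
  set h1 : ℝ → ℝ := fun t => ∑ i, w i * a i * Real.exp (t * a i) with hh1
  set h2 : ℝ → ℝ := fun t => ∑ i, w i * a i ^ 2 * Real.exp (t * a i) with hh2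
  have hpos : ∀ t, 0 < h t := fun t =>
    Finset.sum_pos (fun i _ => mul_pos (hw i) (Real.exp_pos _)) Finset.univ_nonempty
  have hKnn : 0 ≤ K := by
    have := hK (Classical.arbitrary ι) (Classical.arbitrary ι); nlinarith
  have hd : ∀ t, HasDerivAt h (h1 t) t := by
    intro t
    have : ∀ i ∈ Finset.univ, HasDerivAt (fun t => w i * Real.exp (t * a i))
        (w i * a i * Real.exp (t * a i)) t := by
      intro i _
      have := (((hasDerivAt_id t).mul_const (a i)).exp).const_mul (w i)
      simpa [id_eq, mul_comm, mul_left_comm, mul_assoc] using this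
    exact HasDerivAt.fun_sum this
  have hd1 : ∀ t, HasDerivAt h1 (h2 t) t := by
    intro t
    have : ∀ i ∈ Finset.univ, HasDerivAt (fun t => w i * a i * Real.exp (t * a i))
        (w i * a i ^ 2 * Real.exp (t * a i)) t := by
      intro i _
      have := (((hasDerivAt_id t).mul_const (a i)).exp).const_mul (w i * a i)
      have h := this
      refine h.congr_deriv ?_
      simp only [id_eq, one_mul]
      ring
    exact HasDerivAt.fun_sum this
  -- key variance bound
  have key : ∀ t, h2 t * h t - h1 t ^ 2 ≤ K * h t ^ 2 := by
    intro t
    have := softmax_aux_var_bound (fun i => w i * Real.exp (t * a i)) a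
      (fun i => le_of_lt (mul_pos (hw i) (Real.exp_pos _))) K hK
    calc h2 t * h t - h1 t ^ 2
        = (∑ i, (w i * Real.exp (t * a i)) * a i ^ 2) * (∑ i, w i * Real.exp (t * a i))
          - (∑ i, (w i * Real.exp (t * a i)) * a i) ^ 2 := by
          simp only [hh, hh1, hh2]
          congr 1
          · congr 1
            exact Finset.sum_congr rfl fun i _ => by ring
          · congr 1
            exact Finset.sum_congr rfl fun i _ => by ring
      _ ≤ K * (∑ i, w i * Real.exp (t * a i)) ^ 2 := this
      _ = K * h t ^ 2 := rfl
  -- φ = derivative of the upper bound minus the derivative of g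
  set φ : ℝ → ℝ := fun t => h1 0 / h 0 + K * (2 * t) - h1 t / h t with hφ
  have hφd : ∀ t, HasDerivAt φ (K * 2 - (h2 t * h t - h1 t * h1 t) / h t ^ 2) t := by
    intro t
    have d1 : HasDerivAt (fun t : ℝ => h1 0 / h 0 + K * (2 * t)) (K * 2) t := by
      have := ((hasDerivAt_id t).const_mul (2:ℝ)).const_mul K
      have := this.const_add (h1 0 / h 0)
      refine this.congr_deriv ?_
      ring
    exact d1.sub ((hd1 t).div (hd t) (hpos t).ne')
  have hφ0 : φ 0 = 0 := by simp [hφ]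
  have hφmono : Monotone φ := by
    apply monotone_of_deriv_nonneg
    · exact fun t => (hφd t).differentiableAt
    · intro t
      rw [(hφd t).deriv]
      have := key t
      have h2p : (0:ℝ) < h t ^ 2 := pow_pos (hpos t) 2
      have : (h2 t * h t - h1 t * h1 t) / h t ^ 2 ≤ K := by
        rw [div_le_iff₀ h2p]
        nlinarith
      linarith
  have hφnn : ∀ t, 0 ≤ t → 0 ≤ φ t := fun t ht => hφ0 ▸ hφmono ht
  -- F
  set F : ℝ → ℝ := fun t => Real.log (h 0) + t * (h1 0 / h 0) + K * t ^ 2 - Real.log (h t)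
    with hF
  have hFd : ∀ t, HasDerivAt F (φ t) t := by
    intro t
    have dlog : HasDerivAt (fun t => Real.log (h t)) (h1 t / h t) t :=
      (hd t).log (hpos t).ne'
    have dpoly : HasDerivAt (fun t : ℝ => Real.log (h 0) + t * (h1 0 / h 0) + K * t ^ 2)
        (h1 0 / h 0 + K * (2 * t)) t := by
      have p1 : HasDerivAt (fun t : ℝ => t * (h1 0 / h 0)) (h1 0 / h 0) t := by
        simpa using (hasDerivAt_id t).mul_const (h1 0 / h 0)
      have p2 : HasDerivAt (fun t : ℝ => K * t ^ 2) (K * (2 * t)) t := by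
        have := (hasDerivAt_pow 2 t).const_mul K
        refine this.congr_deriv ?_
        norm_num
      exact ((p1.const_add (Real.log (h 0))).add p2)
    exact dpoly.sub dlog
  have hF01 : F 0 ≤ F 1 := by
    have : MonotoneOn F (Set.Icc 0 1) := by
      apply monotoneOn_of_deriv_nonneg (convex_Icc 0 1)
      · exact fun t _ => ((hFd t).differentiableAt.continuousAt).continuousWithinAt
      · exact fun t _ => ((hFd t).differentiableAt).differentiableWithinAt
      · intro t ht
        rw [(hFd t).deriv]
        exact hφnn t (le_of_lt (by simpa using (Set.mem_Ioo.mp (by simpa using ht)).1))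
    exact this (Set.mem_Icc.mpr ⟨le_refl 0, zero_le_one⟩)
      (Set.mem_Icc.mpr ⟨zero_le_one, le_refl 1⟩) zero_le_one
  have hF0 : F 0 = 0 := by simp [hF]
  have h0eq : h 0 = ∑ i, w i := by simp [hh]
  have h1eq : h 1 = ∑ i, w i * Real.exp (a i) := by simp [hh]
  have h10eq : h1 0 = ∑ i, w i * a i := by simp [hh1]
  have := hF0 ▸ hF01
  simp only [hF] at this
  rw [h0eq, h1eq, h10eq] at this
  linarith

/-- **Lemma 1 (smoothness of the softmax loss).**
For `ℓ(v) = log(1 + ∑_{i ≠ j} exp(1 - v_j + v_i))` one has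
`ℓ(u + v) ≤ ℓ(u) + ⟨∇ℓ(u), v⟩ + ‖v‖_∞²`. -/
theorem softmax_loss_smoothness
    (k : ℕ) (hk : 2 ≤ k) (j : Fin k)
    (ℓ : (Fin k → ℝ) → ℝ)
    (hℓ : ∀ v, ℓ v = Real.log (1 + ∑ i ∈ Finset.univ.erase j, Real.exp (1 - v j + v i)))
    (u v : Fin k → ℝ) :
    ℓ (u + v) ≤ ℓ u + fderiv ℝ ℓ u v + ‖v‖ ^ 2 := by
  haveI : Nonempty (Fin k) := Fin.pos_iff_nonempty.mp (by omega)
  have hℓfun : ℓ = fun w => Real.log (1 + ∑ i ∈ Finset.univ.erase j,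
      Real.exp (1 - w j + w i)) := funext hℓ
  set E := Finset.univ.erase j with hE
  set L : Fin k → (Fin k → ℝ) →L[ℝ] ℝ := fun i =>
    (ContinuousLinearMap.proj i : (Fin k → ℝ) →L[ℝ] ℝ) - ContinuousLinearMap.proj j with hL
  have hLapp : ∀ i w, L i w = w i - w j := by
    intro i w
    simp [hL, ContinuousLinearMap.sub_apply, ContinuousLinearMap.proj_apply]
  set S : ℝ := 1 + ∑ i ∈ E, Real.exp (1 - u j + u i) with hS
  have hSpos : 0 < S := by
    have : 0 ≤ ∑ i ∈ E, Real.exp (1 - u j + u i) :=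
      Finset.sum_nonneg fun i _ => (Real.exp_pos _).le
    linarith
  -- fderiv computation
  have hFD : HasFDerivAt ℓ
      (S⁻¹ • (∑ i ∈ E, Real.exp (1 - u j + u i) • L i)) u := by
    rw [hℓfun]
    have hsum : HasFDerivAt (fun w : Fin k → ℝ => 1 + ∑ i ∈ E, Real.exp (1 - w j + w i))
        (∑ i ∈ E, Real.exp (1 - u j + u i) • L i) u := by
      have hterm : ∀ i ∈ E, HasFDerivAt (fun w : Fin k → ℝ => Real.exp (1 - w j + w i))
          (Real.exp (1 - u j + u i) • L i) u := by
        intro i _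
        have hlin : HasFDerivAt (fun w : Fin k → ℝ => 1 - w j + w i) (L i) u := by
          have : (fun w : Fin k → ℝ => 1 - w j + w i) = fun w => 1 + L i w := by
            funext w; rw [hLapp]; ring
          rw [this]
          exact ((L i).hasFDerivAt).const_add 1
        have := hlin.exp
        simpa using this
      have := HasFDerivAt.fun_sum hterm
      exact this.const_add 1
    have hne : (1 + ∑ i ∈ E, Real.exp (1 - u j + u i)) ≠ 0 := by rw [← hS]; exact hSpos.ne'
    have := hsum.log hne
    rw [← hS] at this
    exact this
  have hfderiv : fderiv ℝ ℓ u v = (∑ i ∈ E, Real.exp (1 - u j + u i) * (v i - v j)) / S := by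
    rw [hFD.fderiv]
    simp only [ContinuousLinearMap.smul_apply, ContinuousLinearMap.coe_sum',
      Finset.sum_apply, ContinuousLinearMap.smul_apply, smul_eq_mul]
    rw [Finset.sum_congr rfl fun i _ => by rw [hLapp i v]]
    · exact (div_eq_inv_mul _ _).symm
  -- set up the application of the core lemma
  set w' : Fin k → ℝ := fun i => if i = j then 1 else Real.exp (1 - u j + u i) with hw'
  have hwpos : ∀ i, 0 < w' i := by
    intro i
    by_cases hij : i = j <;> simp [hw', hij, Real.exp_pos]
  have hb : ∀ i m, ((v i - v j) - (v m - v j)) ^ 2 ≤ 4 * ‖v‖ ^ 2 := by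
    intro i m
    have hvi : |v i| ≤ ‖v‖ := by simpa [Real.norm_eq_abs] using norm_le_pi_norm v i
    have hvm : |v m| ≤ ‖v‖ := by simpa [Real.norm_eq_abs] using norm_le_pi_norm v m
    obtain ⟨hi1, hi2⟩ := abs_le.mp hvi
    obtain ⟨hm1, hm2⟩ := abs_le.mp hvm
    nlinarith
  have key := softmax_aux_core w' (fun i => v i - v j) hwpos (‖v‖ ^ 2) hb
  have e1 : ∑ i, w' i = S := by
    rw [hS, ← Finset.add_sum_erase _ _ (Finset.mem_univ j)]
    congr 1
    · simp [hw']
    · exact Finset.sum_congr rfl fun i hi => by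
        simp [hw', (Finset.mem_erase.mp hi).1]
  have e2 : ∑ i, w' i * Real.exp (v i - v j)
      = 1 + ∑ i ∈ E, Real.exp (1 - (u + v) j + (u + v) i) := by
    rw [← Finset.add_sum_erase _ _ (Finset.mem_univ j)]
    congr 1
    · simp [hw']
    · refine Finset.sum_congr rfl fun i hi => ?_
      have hij : i ≠ j := (Finset.mem_erase.mp hi).1
      rw [hw']
      simp only [if_neg hij, ← Real.exp_add, Pi.add_apply]
      congr 1
      ring
  have e3 : ∑ i, w' i * (v i - v j) = ∑ i ∈ E, Real.exp (1 - u j + u i) * (v i - v j) := by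
    rw [← Finset.add_sum_erase _ _ (Finset.mem_univ j)]
    have : w' j * (v j - v j) = 0 := by simp
    rw [this, zero_add]
    exact Finset.sum_congr rfl fun i hi => by
      simp [hw', (Finset.mem_erase.mp hi).1]
  rw [e1, e2, e3] at key
  rw [hℓ (u + v), hℓ u, hfderiv]
  rw [← hS]
  exact key

end
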